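/- Let N ≥ 1, let μ₁ ≥ μ₂ ≥ … ≥ μ_N > 0 be real numbers, and let σ₀ ≤ σ₁ ≤ … ≤ σ_N be real numbers with 2√μ₁ + σ_N ≥ 0. Then (3/4)∑_{j=1}^N μ_j(σ_j − σ_{j−1}) + (1/4)(σ₀³ − σ_N³) ≤ (1/2)μ₁^{3/2} − (3/4)μ₁σ₀ + (1/4)σ₀³. -/
import Mathlib


lemma tel_aux (σ : ℕ → ℝ) : ∀ n : ℕ,
    (∑ j ∈ Finset.Icc 1 n, (σ j - σ (j - 1))) = σ n - σ 0 := by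
  intro n
  induction n with
  | zero => simp
  | succ n ih =>
    rw [Finset.sum_Icc_succ_top (Nat.one_le_iff_ne_zero.mpr (Nat.succ_ne_zero n)), ih]
    simp

/-- The elementary real-number inequality showing that the improved Lieb–Thirring
inequality implies the inequality of Exner, Laptev and Usman. Here `μ 1 ≥ … ≥ μ N > 0`
and `σ 0 ≤ σ 1 ≤ … ≤ σ N` with `2√(μ 1) + σ N ≥ 0`. -/
theorem key_real_inequality
    (N : ℕ) (hN : 1 ≤ N) (μ σ : ℕ → ℝ)
    (hμdec : ∀ j, 1 ≤ j → j < N → μ (j + 1) ≤ μ j)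
    (hμpos : ∀ j, 1 ≤ j → j ≤ N → 0 < μ j)
    (hσmono : ∀ j, j < N → σ j ≤ σ (j + 1))
    (hsum : 0 ≤ 2 * Real.sqrt (μ 1) + σ N) :
    3/4 * (∑ j ∈ Finset.Icc 1 N, μ j * (σ j - σ (j - 1)))
        + 1/4 * ((σ 0) ^ 3 - (σ N) ^ 3)
      ≤ 1/2 * μ 1 ^ ((3:ℝ)/2) - 3/4 * μ 1 * σ 0 + 1/4 * (σ 0) ^ 3 := by
  -- μ_j ≤ μ_1 for 1 ≤ j ≤ N
  have hμle : ∀ j, 1 ≤ j → j ≤ N → μ j ≤ μ 1 := by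
    intro j
    induction j with
    | zero => omega
    | succ k ih =>
      intro _ h2
      rcases Nat.eq_zero_or_pos k with hk | hk
      · subst hk; exact le_refl _
      · exact le_trans (hμdec k hk (by omega)) (ih hk (by omega))
  -- each increment is nonnegative
  have hΔ : ∀ j ∈ Finset.Icc 1 N, 0 ≤ σ j - σ (j - 1) := by
    intro j hj
    simp only [Finset.mem_Icc] at hj
    have := hσmono (j - 1) (by omega)
    have hj1 : j - 1 + 1 = j := by omega
    rw [hj1] at this
    linarith
  -- bound the sum
  have hbound : (∑ j ∈ Finset.Icc 1 N, μ j * (σ j - σ (j - 1)))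
      ≤ ∑ j ∈ Finset.Icc 1 N, μ 1 * (σ j - σ (j - 1)) := by
    apply Finset.sum_le_sum
    intro j hj
    simp only [Finset.mem_Icc] at hj
    exact mul_le_mul_of_nonneg_right (hμle j hj.1 hj.2)
      (hΔ j (Finset.mem_Icc.mpr hj))
  -- telescoping
  have htel : (∑ j ∈ Finset.Icc 1 N, (σ j - σ (j - 1))) = σ N - σ 0 :=
    tel_aux σ N
  have hsum2 : (∑ j ∈ Finset.Icc 1 N, μ j * (σ j - σ (j - 1)))
      ≤ μ 1 * (σ N - σ 0) := by
    calc (∑ j ∈ Finset.Icc 1 N, μ j * (σ j - σ (j - 1)))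
        ≤ ∑ j ∈ Finset.Icc 1 N, μ 1 * (σ j - σ (j - 1)) := hbound
      _ = μ 1 * ∑ j ∈ Finset.Icc 1 N, (σ j - σ (j - 1)) := by
          rw [Finset.mul_sum]
      _ = μ 1 * (σ N - σ 0) := by rw [htel]
  -- set t = √μ₁
  set t := Real.sqrt (μ 1) with ht
  have hμ1 : 0 < μ 1 := hμpos 1 le_rfl hN
  have ht0 : 0 ≤ t := Real.sqrt_nonneg _
  have ht2 : t ^ 2 = μ 1 := Real.sq_sqrt hμ1.le
  have hrpow : μ 1 ^ ((3:ℝ)/2) = t ^ 3 := by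
    rw [ht, Real.sqrt_eq_rpow, ← Real.rpow_natCast (μ 1 ^ ((1:ℝ)/2)) 3,
      ← Real.rpow_mul hμ1.le]
    norm_num
  rw [hrpow]
  -- key cubic inequality
  have hkey : 0 ≤ (t - σ N) ^ 2 * (2 * t + σ N) :=
    mul_nonneg (sq_nonneg _) hsum
  nlinarith [hsum2, sq_nonneg (t - σ N), ht2]
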